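/- There exists a MAPF instance, a total priority ordering ≺ on its agents, and a solution L* consistent with ≺ whose flowtime equals the minimum flowtime over all solutions (so the instance is OP-solvable), together with a path π' for the ≺-highest-priority agent a_h whose arrival time equals the graph distance from s_h to t_h in G (an individually optimal path for a_h), such that no solution consistent with ≺ assigns the path π' to agent a_h; hence prioritized planning with the correct total priority ordering but an unlucky tie-breaking choice of the highest-priority agent's individually optimal path can fail to find any solution, even on OP-solvable instances. -/

import Mathlib

/-- Two (space-time) paths have a vertex collision: same vertex at the same time. -/
def VCol {V : Type} (π σ : ℕ → V) : Prop := ∃ t, π t = σ t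

/-- Two (space-time) paths have an edge collision: they traverse the same edge in
opposite directions at the same time. -/
def ECol {V : Type} (π σ : ℕ → V) : Prop := ∃ t, π t = σ (t + 1) ∧ π (t + 1) = σ t

/-- Two paths collide if they have a vertex collision or an edge collision. -/
def Collide {V : Type} (π σ : ℕ → V) : Prop := VCol π σ ∨ ECol π σ

/-- `π : ℕ → V` is a path from `s` to `t` in `G`: it starts at `s`, at each time step
it stays put or moves along an edge of `G`, and it is eventually always at `t`. -/
def IsPathFun {V : Type} (G : SimpleGraph V) (s t : V) (π : ℕ → V) : Prop :=
  π 0 = s ∧ (∀ n, π (n + 1) = π n ∨ G.Adj (π n) (π (n + 1))) ∧ ∃ T, ∀ n ≥ T, π n = t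

/-- The arrival time of a path at a target vertex `tgt`: the least time `T` such that
the path is at `tgt` at all times `≥ T`. -/
noncomputable def arrivalTime {V : Type} (tgt : V) (π : ℕ → V) : ℕ :=
  sInf {T | ∀ n ≥ T, π n = tgt}

/-- A MAPF instance: a connected undirected graph and `M` agents with pairwise distinct
start vertices and pairwise distinct target vertices. -/
structure MAPF where
  V : Type
  G : SimpleGraph V
  conn : G.Connected
  M : ℕ
  s : Fin M → V
  t : Fin M → V
  s_inj : Function.Injective s
  t_inj : Function.Injective t

/-- `π` is a path for agent `i` of the MAPF instance `P`. -/
def MAPF.IsPath (P : MAPF) (i : Fin P.M) (π : ℕ → P.V) : Prop :=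
  IsPathFun P.G (P.s i) (P.t i) π

/-- The arrival time of agent `i`'s path `π`. -/
noncomputable def MAPF.arr (P : MAPF) (i : Fin P.M) (π : ℕ → P.V) : ℕ :=
  arrivalTime (P.t i) π

/-- A solution: a path for each agent such that no two paths collide. -/
def MAPF.Solution (P : MAPF) (π : Fin P.M → ℕ → P.V) : Prop :=
  (∀ i, P.IsPath i (π i)) ∧ ∀ i j, i ≠ j → ¬ Collide (π i) (π j)

/-- A priority ordering: a strict partial order (irreflexive and transitive relation)
on the agents. -/
def IsPO {M : ℕ} (r : Fin M → Fin M → Prop) : Prop :=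
  (∀ i, ¬ r i i) ∧ ∀ i j k, r i j → r j k → r i k

/-- A total priority ordering: a strict total order on the agents. -/
def IsTotalPO {M : ℕ} (r : Fin M → Fin M → Prop) : Prop :=
  IsPO r ∧ ∀ i j : Fin M, i ≠ j → r i j ∨ r j i

/-- A plan `π` is consistent with a priority ordering `r`: for every agent `i`, the
arrival time of `π i` is the minimum arrival time over all paths for agent `i` that
have no collision with `π j` for every higher-priority agent `j` (`r j i`). -/
def MAPF.Consistent (P : MAPF) (π : Fin P.M → ℕ → P.V)
    (r : Fin P.M → Fin P.M → Prop) : Prop :=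
  ∀ i, IsLeast {T | ∃ σ, P.IsPath i σ ∧ (∀ j, r j i → ¬ Collide σ (π j)) ∧ P.arr i σ = T}
    (P.arr i (π i))

/-- A MAPF instance is P-solvable if it admits a solution consistent with some
priority ordering. -/
def MAPF.PSolvable (P : MAPF) : Prop :=
  ∃ π r, IsPO r ∧ P.Solution π ∧ P.Consistent π r

/-- The flowtime of a plan: the sum of the arrival times of all agents. -/
noncomputable def MAPF.flowtime (P : MAPF) (π : Fin P.M → ℕ → P.V) : ℕ :=
  ∑ i, P.arr i (π i)

/-- The makespan of a plan: the maximum of the arrival times of all agents. -/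
noncomputable def MAPF.makespan (P : MAPF) (π : Fin P.M → ℕ → P.V) : ℕ :=
  Finset.univ.sup fun i => P.arr i (π i)

/-- A MAPF instance is well-formed if every agent has a (finite) walk from its start
vertex to its target vertex that visits neither the start vertex nor the target vertex
of any other agent. -/
def MAPF.WellFormed (P : MAPF) : Prop :=
  ∀ i, ∃ w : P.G.Walk (P.s i) (P.t i),
    ∀ j, j ≠ i → P.s j ∉ w.support ∧ P.t j ∉ w.support

/-! ### Auxiliary material for `stmt10` -/

section Stmt10Aux

/-- Edge list of the counterexample graph on 10 vertices. -/
def adjL : List (Fin 10 × Fin 10) :=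
  [(0,1),(1,2),(2,3),(0,4),(4,5),(5,3),(5,7),(7,6),(4,8),(1,9)]

def adjB (a b : Fin 10) : Bool := (a,b) ∈ adjL || (b,a) ∈ adjL

def G10 : SimpleGraph (Fin 10) where
  Adj a b := adjB a b = true
  symm := by
    have H : ∀ a b : Fin 10, adjB a b = true → adjB b a = true := by decide
    exact ⟨fun a b h => H a b h⟩
  loopless := by
    have H : ∀ a : Fin 10, ¬ adjB a a = true := by decide
    exact ⟨fun a h => H a h⟩

instance : DecidableRel G10.Adj := fun a b => inferInstanceAs (Decidable (adjB a b = true))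

def w03 : G10.Walk 0 3 :=
  .cons (by decide : G10.Adj 0 1) (.cons (by decide : G10.Adj 1 2)
    (.cons (by decide : G10.Adj 2 3) .nil))

lemma reach0 : ∀ v, G10.Reachable 0 v := by
  intro v
  fin_cases v
  · exact SimpleGraph.Reachable.refl _
  · exact ⟨.cons (by decide : G10.Adj 0 1) .nil⟩
  · exact ⟨.cons (by decide : G10.Adj 0 1) (.cons (by decide : G10.Adj 1 2) .nil)⟩
  · exact ⟨w03⟩
  · exact ⟨.cons (by decide : G10.Adj 0 4) .nil⟩
  · exact ⟨.cons (by decide : G10.Adj 0 4) (.cons (by decide : G10.Adj 4 5) .nil)⟩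
  · exact ⟨.cons (by decide : G10.Adj 0 4) (.cons (by decide : G10.Adj 4 5)
      (.cons (by decide : G10.Adj 5 7) (.cons (by decide : G10.Adj 7 6) .nil)))⟩
  · exact ⟨.cons (by decide : G10.Adj 0 4) (.cons (by decide : G10.Adj 4 5)
      (.cons (by decide : G10.Adj 5 7) .nil))⟩
  · exact ⟨.cons (by decide : G10.Adj 0 4) (.cons (by decide : G10.Adj 4 8) .nil)⟩
  · exact ⟨.cons (by decide : G10.Adj 0 1) (.cons (by decide : G10.Adj 1 9) .nil)⟩

lemma conn10 : G10.Connected :=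
  (SimpleGraph.connected_iff_exists_forall_reachable G10).mpr ⟨0, reach0⟩

/-! ### The four relevant space-time paths -/

/-- Corridor route of the top agent: `0,1,2,3,3,...` -/
def pA : ℕ → Fin 10
  | 0 => 0 | 1 => 1 | 2 => 2 | _+3 => 3

/-- Alternative shortest route of the top agent: `0,4,5,3,3,...` -/
def pB : ℕ → Fin 10
  | 0 => 0 | 1 => 4 | 2 => 5 | _+3 => 3

/-- Path of the middle agent in the good plan: `9,9,1,0,4,5,5,...` -/
def pb : ℕ → Fin 10
  | 0 => 9 | 1 => 9 | 2 => 1 | 3 => 0 | 4 => 4 | _+5 => 5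

/-- Path of the bottom agent in the good plan: `6,7,5,4,8,8,...` -/
def pc : ℕ → Fin 10
  | 0 => 6 | 1 => 7 | 2 => 5 | 3 => 4 | _+4 => 8

/-- Forced path of the middle agent when the top agent uses `pB`: `9,1,0,4,5,5,...` -/
def pb' : ℕ → Fin 10
  | 0 => 9 | 1 => 1 | 2 => 0 | 3 => 4 | _+4 => 5

/-! ### Generic lemmas about `arrivalTime` -/

lemma arr_le' {V : Type} {tgt : V} {π : ℕ → V} {T : ℕ} (h : ∀ n ≥ T, π n = tgt) :
    arrivalTime tgt π ≤ T := Nat.sInf_le h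

lemma arr_spec {V : Type} {tgt : V} {π : ℕ → V} (hne : ∃ T, ∀ n ≥ T, π n = tgt) :
    ∀ n ≥ arrivalTime tgt π, π n = tgt :=
  Nat.sInf_mem (s := {T | ∀ n ≥ T, π n = tgt}) hne

lemma arr_spec' {V : Type} {tgt : V} {π : ℕ → V} {k : ℕ} (hne : ∃ T, ∀ n ≥ T, π n = tgt)
    (h : arrivalTime tgt π ≤ k) : ∀ n ≥ k, π n = tgt :=
  fun n hn => arr_spec hne n (le_trans h hn)

lemma arr_eq' {V : Type} {tgt : V} {π : ℕ → V} {k : ℕ} (hk : π k ≠ tgt)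
    (h : ∀ n ≥ k+1, π n = tgt) : arrivalTime tgt π = k+1 := by
  refine le_antisymm (arr_le' h) (le_csInf ⟨k+1, h⟩ ?_)
  intro T hT
  by_contra hlt
  push_neg at hlt
  exact hk (hT k (by omega))

lemma arr_ne_pred {V : Type} {tgt : V} {π : ℕ → V} {k : ℕ}
    (hne : ∃ T, ∀ n ≥ T, π n = tgt) (harr : arrivalTime tgt π = k + 1) :
    π k ≠ tgt := by
  intro hkk
  have hev := arr_spec hne
  rw [harr] at hev
  have hmem : ∀ n ≥ k, π n = tgt := by
    intro n hn
    rcases eq_or_lt_of_le hn with rfl | hlt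
    · exact hkk
    · exact hev n hlt
  have := arr_le' hmem
  omega

/-! ### The four paths are paths, with known arrival times -/

lemma path_pA : IsPathFun G10 0 3 pA := by
  refine ⟨rfl, ?_, 3, ?_⟩
  · intro n
    match n with
    | 0 => exact Or.inr (by decide)
    | 1 => exact Or.inr (by decide)
    | 2 => exact Or.inr (by decide)
    | n+3 => exact Or.inl rfl
  · intro n hn
    obtain ⟨k, rfl⟩ : ∃ k, n = k+3 := ⟨n-3, by omega⟩
    rfl

lemma path_pB : IsPathFun G10 0 3 pB := by
  refine ⟨rfl, ?_, 3, ?_⟩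
  · intro n
    match n with
    | 0 => exact Or.inr (by decide)
    | 1 => exact Or.inr (by decide)
    | 2 => exact Or.inr (by decide)
    | n+3 => exact Or.inl rfl
  · intro n hn
    obtain ⟨k, rfl⟩ : ∃ k, n = k+3 := ⟨n-3, by omega⟩
    rfl

lemma path_pb : IsPathFun G10 9 5 pb := by
  refine ⟨rfl, ?_, 5, ?_⟩
  · intro n
    match n with
    | 0 => exact Or.inl rfl
    | 1 => exact Or.inr (by decide)
    | 2 => exact Or.inr (by decide)
    | 3 => exact Or.inr (by decide)
    | 4 => exact Or.inr (by decide)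
    | n+5 => exact Or.inl rfl
  · intro n hn
    obtain ⟨k, rfl⟩ : ∃ k, n = k+5 := ⟨n-5, by omega⟩
    rfl

lemma path_pc : IsPathFun G10 6 8 pc := by
  refine ⟨rfl, ?_, 4, ?_⟩
  · intro n
    match n with
    | 0 => exact Or.inr (by decide)
    | 1 => exact Or.inr (by decide)
    | 2 => exact Or.inr (by decide)
    | 3 => exact Or.inr (by decide)
    | n+4 => exact Or.inl rfl
  · intro n hn
    obtain ⟨k, rfl⟩ : ∃ k, n = k+4 := ⟨n-4, by omega⟩
    rfl

lemma path_pb' : IsPathFun G10 9 5 pb' := by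
  refine ⟨rfl, ?_, 4, ?_⟩
  · intro n
    match n with
    | 0 => exact Or.inr (by decide)
    | 1 => exact Or.inr (by decide)
    | 2 => exact Or.inr (by decide)
    | 3 => exact Or.inr (by decide)
    | n+4 => exact Or.inl rfl
  · intro n hn
    obtain ⟨k, rfl⟩ : ∃ k, n = k+4 := ⟨n-4, by omega⟩
    rfl

lemma ev_pA : ∀ n ≥ 3, pA n = 3 := by
  intro n hn
  obtain ⟨k, rfl⟩ : ∃ k, n = k+3 := ⟨n-3, by omega⟩
  rfl

lemma ev_pB : ∀ n ≥ 3, pB n = 3 := by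
  intro n hn
  obtain ⟨k, rfl⟩ : ∃ k, n = k+3 := ⟨n-3, by omega⟩
  rfl

lemma arr_pA : arrivalTime 3 pA = 3 :=
  arr_eq' (k := 2) (by decide) ev_pA

lemma arr_pB : arrivalTime 3 pB = 3 :=
  arr_eq' (k := 2) (by decide) ev_pB

lemma arr_pb : arrivalTime 5 pb = 5 :=
  arr_eq' (k := 4) (by decide) (by
    intro n hn
    obtain ⟨k, rfl⟩ : ∃ k, n = k+5 := ⟨n-5, by omega⟩
    rfl)

lemma arr_pc : arrivalTime 8 pc = 4 :=
  arr_eq' (k := 3) (by decide) (by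
    intro n hn
    obtain ⟨k, rfl⟩ : ∃ k, n = k+4 := ⟨n-4, by omega⟩
    rfl)

lemma arr_pb' : arrivalTime 5 pb' = 4 :=
  arr_eq' (k := 3) (by decide) (by
    intro n hn
    obtain ⟨k, rfl⟩ : ∃ k, n = k+4 := ⟨n-4, by omega⟩
    rfl)

/-! ### Collision-freeness of the relevant pairs -/

lemma no_collide_of {V : Type} {π σ : ℕ → V} (h1 : ∀ t, π t ≠ σ t)
    (h2 : ∀ t, π t ≠ σ (t+1) ∨ π (t+1) ≠ σ t) : ¬ Collide π σ := by
  rintro (⟨t, ht⟩ | ⟨t, ht1, ht2⟩)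
  · exact h1 t ht
  · rcases h2 t with hx | hx
    · exact hx ht1
    · exact hx ht2

lemma collide_symm {V : Type} {π σ : ℕ → V} (h : Collide π σ) : Collide σ π := by
  rcases h with ⟨t, ht⟩ | ⟨t, h1, h2⟩
  · exact Or.inl ⟨t, ht.symm⟩
  · exact Or.inr ⟨t, h2.symm, h1.symm⟩

lemma nc_pA_pb : ¬ Collide pA pb := by
  apply no_collide_of
  · intro t
    match t with
    | 0 | 1 | 2 | 3 | 4 => decide
    | n+5 => exact (by decide : (3:Fin 10) ≠ 5)
  · intro t
    right
    match t with
    | 0 | 1 | 2 | 3 | 4 => decide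
    | n+5 => exact (by decide : (3:Fin 10) ≠ 5)

lemma nc_pA_pc : ¬ Collide pA pc := by
  apply no_collide_of
  · intro t
    match t with
    | 0 | 1 | 2 | 3 => decide
    | n+4 => exact (by decide : (3:Fin 10) ≠ 8)
  · intro t
    right
    match t with
    | 0 | 1 | 2 | 3 => decide
    | n+4 => exact (by decide : (3:Fin 10) ≠ 8)

lemma nc_pb_pc : ¬ Collide pb pc := by
  apply no_collide_of
  · intro t
    match t with
    | 0 | 1 | 2 | 3 | 4 => decide
    | n+5 => exact (by decide : (5:Fin 10) ≠ 8)
  · intro t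
    left
    match t with
    | 0 | 1 | 2 | 3 | 4 => decide
    | n+5 => exact (by decide : (5:Fin 10) ≠ 8)

lemma nc_pb'_pB : ¬ Collide pb' pB := by
  apply no_collide_of
  · intro t
    match t with
    | 0 | 1 | 2 | 3 => decide
    | n+4 => exact (by decide : (5:Fin 10) ≠ 3)
  · intro t
    left
    match t with
    | 0 | 1 | 2 | 3 => decide
    | n+4 => exact (by decide : (5:Fin 10) ≠ 3)

/-! ### Lower bounds on arrival times -/

lemma L1 {σ : ℕ → Fin 10} (h : IsPathFun G10 0 3 σ) : 3 ≤ arrivalTime 3 σ := by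
  by_contra hlt
  push_neg at hlt
  have hev : ∀ n ≥ arrivalTime 3 σ, σ n = 3 := arr_spec h.2.2
  have h2 : σ 2 = 3 := hev 2 (by omega)
  have b1 : 3 = σ 1 ∨ G10.Adj (σ 1) 3 := by have hb := h.2.1 1; rw [h2] at hb; exact hb
  have b0 : σ 1 = 0 ∨ G10.Adj 0 (σ 1) := by have hb := h.2.1 0; rw [h.1] at hb; exact hb
  exact (by decide : ∀ x : Fin 10, ((3:Fin 10) = x ∨ G10.Adj x 3) →
    (x = 0 ∨ G10.Adj 0 x) → False) _ b1 b0

lemma L2 {σ : ℕ → Fin 10} (h : IsPathFun G10 9 5 σ) : 4 ≤ arrivalTime 5 σ := by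
  by_contra hlt
  push_neg at hlt
  have hev : ∀ n ≥ arrivalTime 5 σ, σ n = 5 := arr_spec h.2.2
  have h3 : σ 3 = 5 := hev 3 (by omega)
  have b2 : 5 = σ 2 ∨ G10.Adj (σ 2) 5 := by have hb := h.2.1 2; rw [h3] at hb; exact hb
  have b1 := h.2.1 1
  have b0 : σ 1 = 9 ∨ G10.Adj 9 (σ 1) := by have hb := h.2.1 0; rw [h.1] at hb; exact hb
  exact (by decide : ∀ x y : Fin 10, ((5:Fin 10) = x ∨ G10.Adj x 5) →
    (x = y ∨ G10.Adj y x) → (y = 9 ∨ G10.Adj 9 y) → False) _ _ b2 b1 b0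

lemma L3 {σ : ℕ → Fin 10} (h : IsPathFun G10 6 8 σ) : 4 ≤ arrivalTime 8 σ := by
  by_contra hlt
  push_neg at hlt
  have hev : ∀ n ≥ arrivalTime 8 σ, σ n = 8 := arr_spec h.2.2
  have h3 : σ 3 = 8 := hev 3 (by omega)
  have b2 : 8 = σ 2 ∨ G10.Adj (σ 2) 8 := by have hb := h.2.1 2; rw [h3] at hb; exact hb
  have b1 := h.2.1 1
  have b0 : σ 1 = 6 ∨ G10.Adj 6 (σ 1) := by have hb := h.2.1 0; rw [h.1] at hb; exact hb
  exact (by decide : ∀ x y : Fin 10, ((8:Fin 10) = x ∨ G10.Adj x 8) →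
    (x = y ∨ G10.Adj y x) → (y = 6 ∨ G10.Adj 6 y) → False) _ _ b2 b1 b0

/-! ### Forcing lemmas -/

/-- If the top agent arrives at time `3`, it moved through `1` or through `5`. -/
lemma F_h {σ : ℕ → Fin 10} (h : IsPathFun G10 0 3 σ) (harr : arrivalTime 3 σ = 3) :
    σ 1 = 1 ∨ σ 2 = 5 := by
  have hev : ∀ n ≥ 3, σ n = 3 := arr_spec' h.2.2 (le_of_eq harr)
  have hne2 : σ 2 ≠ 3 := arr_ne_pred h.2.2 (show arrivalTime 3 σ = 2 + 1 from harr)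
  have b2 : 3 = σ 2 ∨ G10.Adj (σ 2) 3 := by
    have hb := h.2.1 2; rw [hev 3 le_rfl] at hb; exact hb
  have b1 := h.2.1 1
  have b0 : σ 1 = 0 ∨ G10.Adj 0 (σ 1) := by have hb := h.2.1 0; rw [h.1] at hb; exact hb
  have key : ∀ x y : Fin 10, ((3:Fin 10) = x ∨ G10.Adj x 3) → x ≠ 3 →
      (x = y ∨ G10.Adj y x) → (y = 0 ∨ G10.Adj 0 y) → y = 1 ∨ x = 5 := by decide
  rcases key (σ 2) (σ 1) b2 hne2 b1 b0 with h' | h'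
  · exact Or.inl h'
  · exact Or.inr h'

/-- If the middle agent arrives at time `4` while never touching vertex `3` at time `3`,
its path is forced to be `9,1,0,4,5,5,...`. -/
lemma F_b {σ : ℕ → Fin 10} (h : IsPathFun G10 9 5 σ) (h3 : σ 3 ≠ 3)
    (harr : arrivalTime 5 σ = 4) :
    σ 1 = 1 ∧ σ 2 = 0 ∧ σ 3 = 4 ∧ ∀ n ≥ 4, σ n = 5 := by
  have hev : ∀ n ≥ 4, σ n = 5 := arr_spec' h.2.2 (le_of_eq harr)
  have hne3 : σ 3 ≠ 5 := arr_ne_pred h.2.2 (show arrivalTime 5 σ = 3 + 1 from harr)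
  have b3 : 5 = σ 3 ∨ G10.Adj (σ 3) 5 := by
    have hb := h.2.1 3; rw [hev 4 le_rfl] at hb; exact hb
  have b2 := h.2.1 2
  have b1 := h.2.1 1
  have b0 : σ 1 = 9 ∨ G10.Adj 9 (σ 1) := by have hb := h.2.1 0; rw [h.1] at hb; exact hb
  have key : ∀ x y z : Fin 10, ((5:Fin 10) = x ∨ G10.Adj x 5) → x ≠ 5 → x ≠ 3 →
      (x = y ∨ G10.Adj y x) → (y = z ∨ G10.Adj z y) → (z = 9 ∨ G10.Adj 9 z) →
      z = 1 ∧ y = 0 ∧ x = 4 := by decide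
  obtain ⟨e1, e2, e3⟩ := key (σ 3) (σ 2) (σ 1) b3 hne3 h3 b2 b1 b0
  exact ⟨e1, e2, e3, hev⟩

/-- If the middle agent avoids vertex `1` at time `1` and vertex `3` at time `3`,
it cannot arrive before time `5`. -/
lemma bA_bound {σ : ℕ → Fin 10} (h : IsPathFun G10 9 5 σ) (h1 : σ 1 ≠ 1) (h3 : σ 3 ≠ 3) :
    5 ≤ arrivalTime 5 σ := by
  by_contra hlt
  push_neg at hlt
  have h4 : arrivalTime 5 σ = 4 := le_antisymm (by omega) (L2 h)
  exact h1 (F_b h h3 h4).1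

/-- If the bottom agent avoids vertex `5` at time `2`, it cannot arrive before time `5`. -/
lemma F_2B {σ : ℕ → Fin 10} (h : IsPathFun G10 6 8 σ) (h2 : σ 2 ≠ 5) :
    5 ≤ arrivalTime 8 σ := by
  by_contra hlt
  push_neg at hlt
  have h4 : arrivalTime 8 σ = 4 := le_antisymm (by omega) (L3 h)
  have hev : ∀ n ≥ 4, σ n = 8 := arr_spec' h.2.2 (le_of_eq h4)
  have hne3 : σ 3 ≠ 8 := arr_ne_pred h.2.2 (show arrivalTime 8 σ = 3 + 1 from h4)
  have b3 : 8 = σ 3 ∨ G10.Adj (σ 3) 8 := by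
    have hb := h.2.1 3; rw [hev 4 le_rfl] at hb; exact hb
  have b2 := h.2.1 2
  have b1 := h.2.1 1
  have b0 : σ 1 = 6 ∨ G10.Adj 6 (σ 1) := by have hb := h.2.1 0; rw [h.1] at hb; exact hb
  have key : ∀ x y z : Fin 10, ((8:Fin 10) = x ∨ G10.Adj x 8) → x ≠ 8 →
      (x = y ∨ G10.Adj y x) → (y = z ∨ G10.Adj z y) → (z = 6 ∨ G10.Adj 6 z) →
      y = 5 := by decide
  exact h2 (key (σ 3) (σ 2) (σ 1) b3 hne3 b2 b1 b0)

/-! ### The MAPF instance and the good plan -/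

def P10 : MAPF where
  V := Fin 10
  G := G10
  conn := conn10
  M := 3
  s := ![0, 9, 6]
  t := ![3, 5, 8]
  s_inj := by decide
  t_inj := by decide

def Lstar10 : Fin 3 → ℕ → Fin 10 := ![pA, pb, pc]

def rr : Fin 3 → Fin 3 → Prop := fun i j => i < j

instance (n : ℕ) : OfNat (Fin P10.M) n := inferInstanceAs (OfNat (Fin 3) n)
instance (n : ℕ) : OfNat P10.V n := inferInstanceAs (OfNat (Fin 10) n)
instance : DecidableRel rr := fun i j => inferInstanceAs (Decidable (i < j))
instance : DecidableEq P10.V := inferInstanceAs (DecidableEq (Fin 10))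

lemma sol_Lstar : P10.Solution Lstar10 := by
  constructor
  · intro i
    fin_cases i
    · exact path_pA
    · exact path_pb
    · exact path_pc
  · intro i j hij
    fin_cases i <;> fin_cases j
    · exact absurd rfl hij
    · exact nc_pA_pb
    · exact nc_pA_pc
    · exact fun hc => nc_pA_pb (collide_symm hc)
    · exact absurd rfl hij
    · exact nc_pb_pc
    · exact fun hc => nc_pA_pc (collide_symm hc)
    · exact fun hc => nc_pb_pc (collide_symm hc)
    · exact absurd rfl hij

lemma cons_Lstar : P10.Consistent Lstar10 rr := by
  intro i
  fin_cases i
  · refine ⟨⟨pA, path_pA, ?_, rfl⟩, ?_⟩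
    · exact fun j hj => (Nat.not_lt_zero j.1 hj).elim
    · rintro T ⟨σ, hp, hc, rfl⟩
      exact le_trans (le_of_eq arr_pA) (L1 hp)
  · refine ⟨⟨pb, path_pb, ?_, rfl⟩, ?_⟩
    · intro j hj
      fin_cases j
      · exact fun hc => nc_pA_pb (collide_symm hc)
      · exact absurd hj (by unfold rr; decide)
      · exact absurd hj (by unfold rr; decide)
    · rintro T ⟨σ, hp, hc, rfl⟩
      have hc0 : ¬ Collide σ (Lstar10 0) := hc 0 (by unfold rr; decide)
      have hv : ∀ t, σ t ≠ pA t := fun t ht => hc0 (Or.inl ⟨t, ht⟩)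
      exact le_trans (le_of_eq arr_pb) (bA_bound hp (hv 1) (hv 3))
  · refine ⟨⟨pc, path_pc, ?_, rfl⟩, ?_⟩
    · intro j hj
      fin_cases j
      · exact fun hc => nc_pA_pc (collide_symm hc)
      · exact fun hc => nc_pb_pc (collide_symm hc)
      · exact absurd hj (by unfold rr; decide)
    · rintro T ⟨σ, hp, hc, rfl⟩
      exact le_trans (le_of_eq arr_pc) (L3 hp)

lemma opt_Lstar : ∀ π, P10.Solution π → P10.flowtime Lstar10 ≤ P10.flowtime π := by
  intro π hsol
  unfold MAPF.flowtime
  show (∑ i : Fin 3, P10.arr i (Lstar10 i)) ≤ ∑ i : Fin 3, P10.arr i (π i)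
  rw [Fin.sum_univ_three, Fin.sum_univ_three]
  have e0 : P10.arr 0 (Lstar10 0) = 3 := arr_pA
  have e1 : P10.arr 1 (Lstar10 1) = 5 := arr_pb
  have e2 : P10.arr 2 (Lstar10 2) = 4 := arr_pc
  erw [e0, e1, e2]
  show 3 + 5 + 4 ≤ P10.arr 0 (π 0) + P10.arr 1 (π 1) + P10.arr 2 (π 2)
  have b0 : 3 ≤ P10.arr 0 (π 0) := L1 (hsol.1 0)
  have b1 : 4 ≤ P10.arr 1 (π 1) := L2 (hsol.1 1)
  have b2 : 4 ≤ P10.arr 2 (π 2) := L3 (hsol.1 2)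
  by_cases hc : 4 ≤ P10.arr 0 (π 0)
  · omega
  · have h03 : P10.arr 0 (π 0) = 3 := by omega
    have hev0 : ∀ n ≥ 3, π 0 n = 3 := arr_spec' (hsol.1 0).2.2 (le_of_eq h03)
    rcases F_h (hsol.1 0) h03 with hA | hB
    · -- top agent on the corridor: middle agent is delayed to time 5
      have hnc : ¬ Collide (π 1) (π 0) := hsol.2 1 0 (by decide)
      have hv : ∀ t, π 1 t ≠ π 0 t := fun t ht => hnc (Or.inl ⟨t, ht⟩)
      have h1 : π 1 1 ≠ 1 := fun hh => hv 1 (hh.trans hA.symm)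
      have h3 : π 1 3 ≠ 3 := fun hh => hv 3 (hh.trans (hev0 3 le_rfl).symm)
      have : 5 ≤ P10.arr 1 (π 1) := bA_bound (hsol.1 1) h1 h3
      omega
    · -- top agent on the other route: bottom agent is delayed to time 5
      have hnc : ¬ Collide (π 2) (π 0) := hsol.2 2 0 (by decide)
      have hv : ∀ t, π 2 t ≠ π 0 t := fun t ht => hnc (Or.inl ⟨t, ht⟩)
      have h2 : π 2 2 ≠ 5 := fun hh => hv 2 (hh.trans hB.symm)
      have : 5 ≤ P10.arr 2 (π 2) := F_2B (hsol.1 2) h2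
      omega

/-! ### The trap: no consistent solution lets the top agent use `pB` -/

lemma trap10 : ∀ π, P10.Solution π → P10.Consistent π rr → π 0 ≠ pB := by
  intro π hsol hcons h0
  -- the middle agent's arrival time is forced to be 4
  have hleast : IsLeast {T | ∃ σ, P10.IsPath 1 σ ∧
      (∀ j, rr j 1 → ¬ Collide σ (π j)) ∧ P10.arr 1 σ = T} 4 := by
    constructor
    · refine ⟨pb', path_pb', ?_, arr_pb'⟩
      intro j hj
      fin_cases j
      · show ¬ Collide pb' (π 0)
        rw [h0]; exact nc_pb'_pB
      · exact absurd hj (by decide)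
      · exact absurd hj (by decide)
    · rintro T ⟨σ, hp, hc, rfl⟩
      exact L2 hp
  have harr1 : P10.arr 1 (π 1) = 4 := (hcons 1).unique hleast
  -- hence its path is completely forced
  have hnc10 : ¬ Collide (π 1) (π 0) := hsol.2 1 0 (by decide)
  have hv10 : ∀ t, π 1 t ≠ π 0 t := fun t ht => hnc10 (Or.inl ⟨t, ht⟩)
  have hne3 : π 1 3 ≠ 3 := fun hh => hv10 3 (by rw [h0]; exact hh)
  obtain ⟨hb1, hb2, hb3, hb4⟩ := F_b (hsol.1 1) hne3 harr1
  -- the bottom agent is trapped in {5,6,7}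
  have hp2 : IsPathFun G10 6 8 (π 2) := hsol.1 2
  have hv20 : ∀ t, π 2 t ≠ pB t := fun t ht =>
    hsol.2 2 0 (by decide) (Or.inl ⟨t, by rw [h0]; exact ht⟩)
  have hv21 : ∀ t, π 2 t ≠ π 1 t := fun t ht => hsol.2 2 1 (by decide) (Or.inl ⟨t, ht⟩)
  have he21 : ∀ t, ¬(π 2 t = π 1 (t+1) ∧ π 2 (t+1) = π 1 t) := fun t ht =>
    hsol.2 2 1 (by decide) (Or.inr ⟨t, ht.1, ht.2⟩)
  have key : ∀ t, (π 2 t = 6 ∨ π 2 t = 7) ∨ (t = 3 ∧ π 2 t = 5) := by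
    intro t
    induction t with
    | zero => exact Or.inl (Or.inl hp2.1)
    | succ t ih =>
      have hstep : π 2 (t+1) = π 2 t ∨ G10.Adj (π 2 t) (π 2 (t+1)) := hp2.2.1 t
      rcases ih with (h6 | h7) | ⟨rfl, h5⟩
      · rw [h6] at hstep
        exact Or.inl ((by decide : ∀ x : Fin 10, (x = 6 ∨ G10.Adj 6 x) →
          (x = 6 ∨ x = 7)) _ hstep)
      · rw [h7] at hstep
        rcases (by decide : ∀ x : Fin 10, (x = 7 ∨ G10.Adj 7 x) →
            (x = 7 ∨ x = 5 ∨ x = 6)) _ hstep with hx | hx | hx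
        · exact Or.inl (Or.inr hx)
        · -- moved to the corridor mouth 5: this can only happen at time 3
          right
          refine ⟨?_, hx⟩
          have ht2 : t + 1 ≠ 2 := by
            intro he
            rw [he] at hx
            exact hv20 2 hx
          have ht4 : t + 1 < 4 := by
            by_contra hge
            push_neg at hge
            exact hv21 (t+1) (hx.trans (hb4 (t+1) hge).symm)
          have ht1 : t + 1 ≠ 1 := by
            intro he
            have ht0 : t = 0 := by omega
            rw [ht0] at h7
            rw [hp2.1] at h7
            exact absurd h7 (show (6:Fin 10) ≠ 7 by decide)
          omega
        · exact Or.inl (Or.inl hx)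
      · -- at the mouth at time 3: the only continuation is back into the pocket
        rw [h5] at hstep
        rcases (by decide : ∀ x : Fin 10, (x = 5 ∨ G10.Adj 5 x) →
            (x = 5 ∨ x = 3 ∨ x = 4 ∨ x = 7)) _ hstep with hx | hx | hx | hx
        · exact absurd hx fun hh => hv21 4 (hh.trans (hb4 4 le_rfl).symm)
        · exact absurd hx (hv20 4)
        · exact absurd (he21 3 ⟨h5.trans (hb4 4 le_rfl).symm, hx.trans hb3.symm⟩) not_false
        · exact Or.inl (Or.inr hx)
  obtain ⟨T, hT⟩ := hp2.2.2
  have h8 : π 2 T = 8 := hT T le_rfl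
  rcases key T with (hx | hx) | ⟨_, hx⟩ <;> rw [h8] at hx <;>
    exact absurd hx (by decide)

/-! ### The graph distance from 0 to 3 is 3 -/

lemma dist03 : G10.dist 0 3 = 3 := by
  have hub : G10.dist 0 3 ≤ 3 := by
    have hw : w03.length = 3 := by rfl
    have := SimpleGraph.dist_le w03
    omega
  obtain ⟨p, hp⟩ := (reach0 3).exists_walk_length_eq_dist
  have hpath : IsPathFun G10 0 3 p.getVert := by
    refine ⟨p.getVert_zero, ?_, p.length, fun n hn => p.getVert_of_length_le hn⟩
    intro n
    by_cases hlt : n < p.length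
    · exact Or.inr (p.adj_getVert_succ hlt)
    · push_neg at hlt
      left
      rw [p.getVert_of_length_le hlt, p.getVert_of_length_le (le_trans hlt (Nat.le_succ n))]
  have h3 := L1 hpath
  have hle : arrivalTime 3 p.getVert ≤ p.length :=
    arr_le' (fun n hn => p.getVert_of_length_le hn)
  omega

end Stmt10Aux


/-- There exist an OP-solvable MAPF instance, a total priority ordering `r`, a
flowtime-optimal solution consistent with `r`, and an individually optimal path `π'`
for the highest-priority agent (its arrival time equals the graph distance from its
start to its target), such that no solution consistent with `r` assigns `π'` to the
highest-priority agent: unlucky tie-breaking can make prioritized planning fail. -/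
theorem stmt10 :
    ∃ (P : MAPF) (r : Fin P.M → Fin P.M → Prop), IsTotalPO r ∧
      ∃ h : Fin P.M, (∀ j, j ≠ h → r h j) ∧
        (∃ Lstar, P.Solution Lstar ∧ P.Consistent Lstar r ∧
          ∀ π, P.Solution π → P.flowtime Lstar ≤ P.flowtime π) ∧
        ∃ π' : ℕ → P.V, P.IsPath h π' ∧
          P.arr h π' = P.G.dist (P.s h) (P.t h) ∧
          ∀ π, P.Solution π → P.Consistent π r → π h ≠ π' := by
  refine ⟨P10, rr, ⟨⟨fun i => lt_irrefl i, fun i j k => lt_trans⟩,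
      fun i j hij => Ne.lt_or_gt hij⟩, 0, fun j hj => Fin.pos_of_ne_zero hj,
    ⟨Lstar10, sol_Lstar, cons_Lstar, opt_Lstar⟩,
    pB, path_pB, ?_, trap10⟩
  show arrivalTime 3 pB = G10.dist 0 3
  rw [arr_pB, dist03]
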